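/- Let d, b, e, f, c be rational numbers with b ≠ 0, b ≠ 10 and d ≠ 0. Define λ = e − c/b, δ = (12 − d)·e + f − (1/2 + 4/b)·c, and D = 4·f − (4d − 12)·e. Then −f + ((d−3)/d)·c = (((21 − d − 54/d)·b − 8d + 24)/(b−10))·λ − ((((2 − 6/d)·b − 2d + 6)/(b−10))·δ + (((1 − 6/d)·b − 2d + 16)/(4(b−10)))·D, i.e. −f + ((d−3)/d)·c = (((21 − d − 54/d)·b − 8d + 24)/(b−10))·λ − (((2 − 6/d)·b − 2d + 6)/(b−10))·δ + (((1 − 6/d)·b − 2d + 16)/(4(b−10)))·D. -/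
import Mathlib


theorem stmt2 (d b e f c : ℚ) (hb : b ≠ 0) (hb10 : b ≠ 10) (hd : d ≠ 0)
    (lam δ D : ℚ)
    (hlam : lam = e - c / b)
    (hδ : δ = (12 - d) * e + f - (1/2 + 4/b) * c)
    (hD : D = 4 * f - (4*d - 12) * e) :
    -f + ((d - 3)/d) * c =
      (((21 - d - 54/d) * b - 8*d + 24)/(b - 10)) * lam
      - (((2 - 6/d) * b - 2*d + 6)/(b - 10)) * δ
      + (((1 - 6/d) * b - 2*d + 16)/(4*(b - 10))) * D := by
  have h10 : b - 10 ≠ 0 := sub_ne_zero.mpr hb10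
  subst hlam hδ hD; field_simp; ring
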